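/- An infinite word w over a d-letter alphabet (all letters occurring) is dendric if and only if p_w(n) = (d−1)n + 1 for all n ≥ 1 and the extension graph of every factor of w is connected. -/

import Mathlib

def factorAt {A : Type*} (w : ℕ → A) (i n : ℕ) : List A :=
  (List.range n).map fun k => w (i + k)

def factors {A : Type*} (w : ℕ → A) (n : ℕ) : Set (List A) :=
  {u | ∃ i, u = factorAt w i n}

noncomputable def complexity {A : Type*} (w : ℕ → A) (n : ℕ) : ℕ :=
  (factors w n).ncard

/-- The extension graph of a factor `u` of `w`, as a simple graph on the disjoint
union of two copies of the alphabet: a left copy `Sum.inl a` and a right copy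
`Sum.inr b` are adjacent iff `a · u · b` is a factor of `w`. -/
def extGraph {d : ℕ} (w : ℕ → Fin d) (u : List (Fin d)) :
    SimpleGraph (Fin d ⊕ Fin d) where
  Adj x y := ∃ a b, (a :: (u ++ [b])) ∈ factors w (u.length + 2) ∧
      ((x = Sum.inl a ∧ y = Sum.inr b) ∨ (x = Sum.inr b ∧ y = Sum.inl a))
  symm := by
    constructor
    rintro x y ⟨a, b, hm, hc⟩
    exact ⟨a, b, hm, by tauto⟩
  loopless := by
    constructor
    rintro x ⟨a, b, hm, ⟨h1, h2⟩ | ⟨h1, h2⟩⟩ <;> subst h1 <;> simp at h2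

/-- The vertex set of the extension graph of `u`: the left copies of letters `a`
with `a · u` a factor of `w`, and the right copies of letters `b` with `u · b` a
factor of `w`. -/
def extVertices {d : ℕ} (w : ℕ → Fin d) (u : List (Fin d)) : Set (Fin d ⊕ Fin d) :=
  {x | (∃ a, x = Sum.inl a ∧ (a :: u) ∈ factors w (u.length + 1)) ∨
       (∃ b, x = Sum.inr b ∧ (u ++ [b]) ∈ factors w (u.length + 1))}

/-- `w` is dendric if the extension graph of every factor of `w` is a tree. -/
def Dendric {d : ℕ} (w : ℕ → Fin d) : Prop :=
  ∀ n, ∀ u ∈ factors w n, ((extGraph w u).induce (extVertices w u)).IsTree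

namespace S19

set_option linter.unusedSectionVars false

section GraphTheory

open SimpleGraph Finset

variable {V : Type*} [Fintype V] [DecidableEq V]

theorem connected_card_le (G : SimpleGraph V) [Fintype G.edgeSet]
    (hG : G.Connected) : Fintype.card V ≤ G.edgeFinset.card + 1 := by
  classical
  have hne := hG.nonempty
  obtain ⟨r⟩ := hne
  -- choose a next-step function along geodesics to r
  have hnext : ∀ v : V, v ≠ r → ∃ x : V, G.Adj v x ∧ G.dist v r = G.dist x r + 1 := by
    intro v hv
    have hd : G.dist v r ≠ 0 := by
      simp [SimpleGraph.Connected.dist_eq_zero_iff hG, hv]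
    obtain ⟨p, hp⟩ := SimpleGraph.exists_walk_of_dist_ne_zero hd
    cases p with
    | nil => simp at hd
    | @cons _ x _ h q =>
      refine ⟨x, h, ?_⟩
      have h1 : G.dist x r ≤ q.length := SimpleGraph.dist_le q
      have h2 : G.dist v r ≤ G.dist x r + 1 := by
        obtain ⟨q', hq'⟩ := (hG x r).exists_walk_length_eq_dist
        have := SimpleGraph.dist_le (SimpleGraph.Walk.cons h q')
        simpa [hq'] using this
      simp only [SimpleGraph.Walk.length_cons] at hp
      omega
  choose nx hadj hdist using hnext
  have hinj : Set.InjOn (fun v : {v : V // v ≠ r} => s(v.1, nx v.1 v.2)) Set.univ := by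
    rintro ⟨a, ha⟩ - ⟨b, hb⟩ - hab
    simp only [Sym2.eq, Sym2.rel_iff', Prod.mk.injEq, Prod.swap_prod_mk] at hab
    rcases hab with ⟨h1, h2⟩ | ⟨h1, h2⟩
    · simpa using h1
    · exfalso
      have e1 := hdist a ha
      have e2 := hdist b hb
      rw [h2] at e1
      rw [← h1] at e2
      omega
  have hmap : ∀ v : {v : V // v ≠ r}, s(v.1, nx v.1 v.2) ∈ G.edgeFinset := by
    intro v
    rw [SimpleGraph.mem_edgeFinset]
    exact (hadj v.1 v.2)
  have hcard : Fintype.card {v : V // v ≠ r} ≤ G.edgeFinset.card := by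
    have := Fintype.card_le_of_injective (fun v : {v : V // v ≠ r} =>
      (⟨s(v.1, nx v.1 v.2), hmap v⟩ : G.edgeFinset)) ?_
    · rwa [Fintype.card_coe] at this
    · rintro a b h
      have := hinj (Set.mem_univ a) (Set.mem_univ b) (Subtype.ext_iff.mp h)
      exact this
  have : Nonempty V := ⟨r⟩
  rw [Fintype.card_subtype_compl] at hcard
  have h1 : 1 ≤ Fintype.card V := Fintype.card_pos
  have h2 : Fintype.card {v : V // v = r} = 1 := by simp
  rw [h2] at hcard
  have h3 : Fintype.card ↑G.edgeSet = G.edgeFinset.card := (Set.toFinset_card _).symm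
  omega


theorem connected_reachable_delete {G : SimpleGraph V} {v w : V}
    (hvw : G.Adj v w) (hnb : ¬ G.IsBridge s(v, w)) :
    ∀ x y : V, G.Reachable x y → (G.deleteEdges {s(v, w)}).Reachable x y := by
  have hr : (G.deleteEdges {s(v, w)}).Reachable v w := by
    rw [SimpleGraph.isBridge_iff] at hnb
    push_neg at hnb
    exact hnb
  intro x y hxy
  obtain ⟨p⟩ := hxy
  induction p with
  | nil => exact SimpleGraph.Reachable.refl _
  | @cons a b c h q ih =>
    refine SimpleGraph.Reachable.trans ?_ ih
    by_cases he : s(a, b) = s(v, w)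
    · rw [Sym2.eq_iff] at he
      rcases he with ⟨rfl, rfl⟩ | ⟨rfl, rfl⟩
      · exact hr
      · exact hr.symm
    · exact SimpleGraph.Adj.reachable (by simp [SimpleGraph.deleteEdges_adj, h, he])

theorem isTree_of_connected_of_card (G : SimpleGraph V) [Fintype G.edgeSet]
    (hG : G.Connected) (hcard : G.edgeFinset.card + 1 = Fintype.card V) : G.IsTree := by
  classical
  refine ⟨hG, ?_⟩
  by_contra hac
  rw [SimpleGraph.isAcyclic_iff_forall_adj_isBridge] at hac
  push_neg at hac
  obtain ⟨v, w, hvw, hnb⟩ := hac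
  set H := G.deleteEdges {s(v, w)} with hH
  have hHconn : H.Connected := by
    rw [SimpleGraph.connected_iff]
    exact ⟨fun x y => connected_reachable_delete hvw hnb x y (hG x y), hG.nonempty⟩
  have hle : Fintype.card V ≤ H.edgeFinset.card + 1 := connected_card_le H hHconn
  have hedge : H.edgeFinset = G.edgeFinset.erase s(v, w) := by
    ext e
    simp only [SimpleGraph.mem_edgeFinset, Finset.mem_erase, hH,
      SimpleGraph.edgeSet_deleteEdges, Set.mem_diff, Set.mem_singleton_iff]
    tauto
  have hmem : s(v, w) ∈ G.edgeFinset := by rwa [SimpleGraph.mem_edgeFinset]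
  have : H.edgeFinset.card = G.edgeFinset.card - 1 := by
    rw [hedge, Finset.card_erase_of_mem hmem]
  have hpos : 1 ≤ G.edgeFinset.card := Finset.card_pos.mpr ⟨_, hmem⟩
  omega

end GraphTheory


attribute [local instance] Classical.propDecidable

variable {d : ℕ} (w : ℕ → Fin d)

lemma factorAt_length (i n : ℕ) : (factorAt w i n).length = n := by simp [factorAt]

lemma factorAt_concat (i n : ℕ) : factorAt w i (n+1) = factorAt w i n ++ [w (i+n)] := by
  simp [factorAt, List.range_succ]

lemma factorAt_cons (i n : ℕ) : factorAt w i (n+1) = w i :: factorAt w (i+1) n := by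
  unfold factorAt
  rw [List.range_succ_eq_map]
  simp only [List.map_cons, List.map_map, Nat.add_zero]
  congr 1
  apply List.map_congr_left
  intro k _
  simp only [Function.comp_apply]
  congr 1
  omega

lemma length_of_mem_factors {u : List (Fin d)} {n : ℕ} (h : u ∈ factors w n) :
    u.length = n := by
  obtain ⟨i, rfl⟩ := h; exact factorAt_length w i n

lemma factors_finite (n : ℕ) : (factors w n).Finite :=
  (List.finite_length_eq (Fin d) n).subset fun _ h => length_of_mem_factors w h

lemma mem_factors_self (i n : ℕ) : factorAt w i n ∈ factors w n := ⟨i, rfl⟩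

lemma factors_zero : factors w 0 = {([] : List (Fin d))} := by
  ext u
  constructor
  · rintro ⟨i, rfl⟩; simp [factorAt]
  · rintro rfl; exact ⟨0, by simp [factorAt]⟩

lemma complexity_zero : complexity w 0 = 1 := by
  rw [complexity, factors_zero]; simp

lemma dropLast_mem_factors {u : List (Fin d)} {n : ℕ} (h : u ∈ factors w (n+1)) :
    u.dropLast ∈ factors w n := by
  obtain ⟨i, rfl⟩ := h
  rw [factorAt_concat, List.dropLast_concat]
  exact mem_factors_self w i n

lemma tail_mem_factors {u : List (Fin d)} {n : ℕ} (h : u ∈ factors w (n+1)) :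
    u.tail ∈ factors w n := by
  obtain ⟨i, rfl⟩ := h
  rw [factorAt_cons]
  exact mem_factors_self w (i+1) n

/-- The finset of factors of length `n`. -/
noncomputable def FF (n : ℕ) : Finset (List (Fin d)) := (factors_finite w n).toFinset

lemma mem_FF {u : List (Fin d)} {n : ℕ} : u ∈ FF w n ↔ u ∈ factors w n :=
  Set.Finite.mem_toFinset _

lemma complexity_eq_card (n : ℕ) : complexity w n = (FF w n).card :=
  Set.ncard_eq_toFinset_card _ _

/-- number of right extensions of `u` -/
noncomputable def rnum (u : List (Fin d)) : ℕ :=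
  {b : Fin d | (u ++ [b]) ∈ factors w (u.length + 1)}.ncard

/-- number of left extensions of `u` -/
noncomputable def lnum (u : List (Fin d)) : ℕ :=
  {a : Fin d | (a :: u) ∈ factors w (u.length + 1)}.ncard

/-- number of bi-extensions of `u` -/
noncomputable def enum (u : List (Fin d)) : ℕ :=
  {p : Fin d × Fin d | (p.1 :: (u ++ [p.2])) ∈ factors w (u.length + 2)}.ncard

lemma sum_rnum (n : ℕ) : complexity w (n+1) = ∑ u ∈ FF w n, rnum w u := by
  rw [complexity_eq_card]
  rw [Finset.card_eq_sum_card_fiberwise (f := fun v => v.dropLast) (t := FF w n)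
    (fun v hv => (mem_FF w).2 (dropLast_mem_factors w ((mem_FF w).1 hv)))]
  refine Finset.sum_congr rfl fun u hu => ?_
  have hul : u.length = n := length_of_mem_factors w ((mem_FF w).1 hu)
  rw [rnum, Set.ncard_eq_toFinset_card']
  refine (Finset.card_bij (fun b _ => u ++ [b]) ?_ ?_ ?_).symm
  · intro b hb
    simp only [Set.mem_toFinset, Set.mem_setOf_eq, hul] at hb
    simp [Finset.mem_filter, mem_FF, hb, List.dropLast_concat]
  · intro a _ b _ h
    simpa using List.append_inj_right h rfl
  · intro v hv
    simp only [Finset.mem_filter, mem_FF] at hv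
    obtain ⟨hv1, hv2⟩ := hv
    have hne : v ≠ [] := by
      intro h; rw [h] at hv1; simpa using length_of_mem_factors w hv1
    subst hv2
    refine ⟨v.getLast hne, ?_, ?_⟩
    · simp only [Set.mem_toFinset, Set.mem_setOf_eq, hul]
      rwa [List.dropLast_append_getLast hne]
    · exact List.dropLast_append_getLast hne

lemma sum_lnum (n : ℕ) : complexity w (n+1) = ∑ u ∈ FF w n, lnum w u := by
  rw [complexity_eq_card]
  rw [Finset.card_eq_sum_card_fiberwise (f := fun v => v.tail) (t := FF w n)
    (fun v hv => (mem_FF w).2 (tail_mem_factors w ((mem_FF w).1 hv)))]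
  refine Finset.sum_congr rfl fun u hu => ?_
  have hul : u.length = n := length_of_mem_factors w ((mem_FF w).1 hu)
  rw [lnum, Set.ncard_eq_toFinset_card']
  refine (Finset.card_bij (fun a _ => a :: u) ?_ ?_ ?_).symm
  · intro a ha
    simp only [Set.mem_toFinset, Set.mem_setOf_eq, hul] at ha
    simp [Finset.mem_filter, mem_FF, ha]
  · intro a _ b _ h
    simpa using h
  · intro v hv
    simp only [Finset.mem_filter, mem_FF] at hv
    obtain ⟨hv1, hv2⟩ := hv
    have hne : v ≠ [] := by
      intro h; rw [h] at hv1; simpa using length_of_mem_factors w hv1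
    subst hv2
    refine ⟨v.head hne, ?_, ?_⟩
    · simp only [Set.mem_toFinset, Set.mem_setOf_eq, hul]
      rwa [List.cons_head_tail]
    · exact List.cons_head_tail hne

lemma sum_enum (n : ℕ) : complexity w (n+2) = ∑ u ∈ FF w n, enum w u := by
  rw [complexity_eq_card]
  rw [Finset.card_eq_sum_card_fiberwise (f := fun v => v.tail.dropLast) (t := FF w n)
    (fun v hv => (mem_FF w).2 (dropLast_mem_factors w (tail_mem_factors w ((mem_FF w).1 hv))))]
  refine Finset.sum_congr rfl fun u hu => ?_
  have hul : u.length = n := length_of_mem_factors w ((mem_FF w).1 hu)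
  rw [enum, Set.ncard_eq_toFinset_card']
  refine (Finset.card_bij (fun p _ => p.1 :: (u ++ [p.2])) ?_ ?_ ?_).symm
  · intro p hp
    simp only [Set.mem_toFinset, Set.mem_setOf_eq, hul] at hp
    simp [Finset.mem_filter, mem_FF, hp, List.dropLast_concat]
  · intro p _ q _ h
    simp only [List.cons.injEq] at h
    obtain ⟨h1, h2⟩ := h
    have := List.append_inj_right h2 rfl
    simp only [List.cons.injEq] at this
    exact Prod.ext h1 this.1
  · intro v hv
    simp only [Finset.mem_filter, mem_FF] at hv
    obtain ⟨hv1, hv2⟩ := hv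
    have hlen : v.length = n + 2 := length_of_mem_factors w hv1
    have hne : v ≠ [] := by intro h; rw [h] at hlen; simp at hlen
    have htne : v.tail ≠ [] := by
      intro h
      have := congrArg List.length h
      simp [List.length_tail, hlen] at this
    subst hv2
    refine ⟨(v.head hne, v.tail.getLast htne), ?_, ?_⟩
    · simp only [Set.mem_toFinset, Set.mem_setOf_eq, hul]
      have h5 : v.head hne :: (v.tail.dropLast ++ [v.tail.getLast htne]) = v := by
        rw [List.dropLast_append_getLast htne, List.cons_head_tail]
      rwa [h5]
    · simp only [List.dropLast_append_getLast htne, List.cons_head_tail]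


lemma mem_extVertices_inl {u : List (Fin d)} {a b : Fin d}
    (h : (a :: (u ++ [b])) ∈ factors w (u.length + 2)) : Sum.inl a ∈ extVertices w u := by
  left
  refine ⟨a, rfl, ?_⟩
  have h2 := dropLast_mem_factors w (n := u.length + 1) h
  have h3 : (a :: (u ++ [b])).dropLast = a :: u := by
    have : a :: (u ++ [b]) = (a :: u) ++ [b] := by simp
    rw [this, List.dropLast_concat]
  rwa [h3] at h2

lemma mem_extVertices_inr {u : List (Fin d)} {a b : Fin d}
    (h : (a :: (u ++ [b])) ∈ factors w (u.length + 2)) : Sum.inr b ∈ extVertices w u := by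
  right
  refine ⟨b, rfl, ?_⟩
  have h2 := tail_mem_factors w (n := u.length + 1) h
  simpa using h2

lemma extGraph_adj_inl_inr {u : List (Fin d)} {a b : Fin d} :
    (extGraph w u).Adj (Sum.inl a) (Sum.inr b) ↔
      (a :: (u ++ [b])) ∈ factors w (u.length + 2) := by
  constructor
  · rintro ⟨a', b', hm, ⟨h1, h2⟩ | ⟨h1, h2⟩⟩
    · simp only [Sum.inl.injEq] at h1
      simp only [Sum.inr.injEq] at h2
      rwa [h1, h2]
    · simp at h1
  · intro h
    exact ⟨a, b, h, Or.inl ⟨rfl, rfl⟩⟩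

lemma card_extVertices (u : List (Fin d)) :
    Fintype.card (extVertices w u) = lnum w u + rnum w u := by
  have he : extVertices w u =
      Sum.inl '' {a : Fin d | (a :: u) ∈ factors w (u.length + 1)} ∪
      Sum.inr '' {b : Fin d | (u ++ [b]) ∈ factors w (u.length + 1)} := by
    ext x
    simp only [extVertices, Set.mem_setOf_eq, Set.mem_union, Set.mem_image]
    constructor
    · rintro (⟨a, rfl, h⟩ | ⟨b, rfl, h⟩)
      · exact Or.inl ⟨a, h, rfl⟩
      · exact Or.inr ⟨b, h, rfl⟩
    · rintro (⟨a, h, rfl⟩ | ⟨b, h, rfl⟩)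
      · exact Or.inl ⟨a, rfl, h⟩
      · exact Or.inr ⟨b, rfl, h⟩
  rw [← Nat.card_eq_fintype_card, Nat.card_coe_set_eq, he]
  rw [Set.ncard_union_eq]
  · rw [Set.ncard_image_of_injective _ Sum.inl_injective,
      Set.ncard_image_of_injective _ Sum.inr_injective]
    rfl
  · rw [Set.disjoint_left]
    rintro x ⟨a, _, rfl⟩ ⟨b, _, h⟩
    simp at h

noncomputable def edgeEquiv (u : List (Fin d)) :
    {p : Fin d × Fin d // (p.1 :: (u ++ [p.2])) ∈ factors w (u.length + 2)} ≃
      ((extGraph w u).induce (extVertices w u)).edgeSet := by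
  refine Equiv.ofBijective (fun p =>
    ⟨s(⟨Sum.inl p.1.1, mem_extVertices_inl w p.2⟩, ⟨Sum.inr p.1.2, mem_extVertices_inr w p.2⟩),
      ?_⟩) ⟨?_, ?_⟩
  · rw [SimpleGraph.mem_edgeSet]
    simp only [SimpleGraph.comap_adj, Function.Embedding.coe_subtype]
    exact (extGraph_adj_inl_inr w).2 p.2
  · rintro ⟨⟨a, b⟩, hp⟩ ⟨⟨a', b'⟩, hq⟩ h
    simp only [Subtype.mk.injEq, Sym2.eq, Sym2.rel_iff', Prod.mk.injEq, Prod.swap_prod_mk] at h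
    rcases h with ⟨h1, h2⟩ | ⟨h1, h2⟩
    · simp only [Sum.inl.injEq] at h1
      simp only [Sum.inr.injEq] at h2
      subst h1; subst h2; rfl
    · simp at h1
  · rintro ⟨e, he⟩
    induction e with
    | _ x y =>
      rw [SimpleGraph.mem_edgeSet] at he
      simp only [SimpleGraph.comap_adj, Function.Embedding.coe_subtype] at he
      obtain ⟨a, b, hm, ⟨h1, h2⟩ | ⟨h1, h2⟩⟩ := he
      · refine ⟨⟨(a, b), hm⟩, ?_⟩
        apply Subtype.ext
        simp only
        congr 1
        exacts [Subtype.ext h1.symm, Subtype.ext h2.symm]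
      · refine ⟨⟨(a, b), hm⟩, ?_⟩
        apply Subtype.ext
        simp only
        rw [Sym2.eq_swap]
        congr 1
        exacts [Subtype.ext h1.symm, Subtype.ext h2.symm]

lemma card_extEdges (u : List (Fin d)) :
    ((extGraph w u).induce (extVertices w u)).edgeFinset.card = enum w u := by
  rw [SimpleGraph.edgeFinset_card, ← Nat.card_eq_fintype_card,
    ← Nat.card_congr (edgeEquiv w u), enum, ← Nat.card_coe_set_eq]
  rfl


lemma extVertices_nonempty {u : List (Fin d)} {n : ℕ} (hu : u ∈ factors w n) :
    (extVertices w u).Nonempty := by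
  obtain ⟨i, rfl⟩ := hu
  refine ⟨Sum.inr (w (i + n)), Or.inr ⟨_, rfl, ?_⟩⟩
  rw [factorAt_length, ← factorAt_concat]
  exact mem_factors_self w i (n + 1)

lemma key_iff {n : ℕ} {u : List (Fin d)} (hu : u ∈ factors w n) :
    ((extGraph w u).induce (extVertices w u)).IsTree ↔
      ((extGraph w u).induce (extVertices w u)).Connected ∧
        enum w u + 1 = lnum w u + rnum w u := by
  constructor
  · intro h
    refine ⟨h.isConnected, ?_⟩
    have hc := h.card_edgeFinset
    rwa [card_extEdges, card_extVertices] at hc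
  · rintro ⟨hc, he⟩
    refine isTree_of_connected_of_card _ hc ?_
    rw [card_extEdges, card_extVertices]
    exact he

lemma card_le_of_connected {u : List (Fin d)}
    (hc : ((extGraph w u).induce (extVertices w u)).Connected) :
    lnum w u + rnum w u ≤ enum w u + 1 := by
  have h := connected_card_le _ hc
  rwa [card_extEdges, card_extVertices] at h

lemma second_diff
    (h : ∀ n, ∀ u ∈ factors w n, enum w u + 1 = lnum w u + rnum w u) (n : ℕ) :
    complexity w (n + 2) + complexity w n = 2 * complexity w (n + 1) := by
  have e1 : complexity w (n + 2) = ∑ u ∈ FF w n, enum w u := sum_enum w n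
  have e2 : complexity w (n + 1) = ∑ u ∈ FF w n, rnum w u := sum_rnum w n
  have e3 : complexity w (n + 1) = ∑ u ∈ FF w n, lnum w u := sum_lnum w n
  have e4 : complexity w n = ∑ _u ∈ FF w n, 1 := by
    rw [complexity_eq_card, Finset.card_eq_sum_ones]
  calc complexity w (n + 2) + complexity w n
      = ∑ u ∈ FF w n, (enum w u + 1) := by rw [e1, e4, Finset.sum_add_distrib]
    _ = ∑ u ∈ FF w n, (lnum w u + rnum w u) :=
        Finset.sum_congr rfl fun u hu => h n u ((mem_FF w).1 hu)
    _ = 2 * complexity w (n + 1) := by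
        rw [Finset.sum_add_distrib, ← e2, ← e3, two_mul]

end S19

theorem stmt19 (d : ℕ) (w : ℕ → Fin d) (hall : complexity w 1 = d) :
    Dendric w ↔
      (∀ n, 1 ≤ n → complexity w n = (d - 1) * n + 1) ∧
      (∀ n, ∀ u ∈ factors w n,
        ((extGraph w u).induce (extVertices w u)).Connected) := by
  have hd : 0 < d := (w 0).pos
  constructor
  · intro h
    have hconn : ∀ n, ∀ u ∈ factors w n,
        ((extGraph w u).induce (extVertices w u)).Connected :=
      fun n u hu => (h n u hu).isConnected
    refine ⟨?_, hconn⟩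
    have hpt : ∀ n, ∀ u ∈ factors w n, S19.enum w u + 1 = S19.lnum w u + S19.rnum w u :=
      fun n u hu => ((S19.key_iff w hu).1 (h n u hu)).2
    have hsd := S19.second_diff w hpt
    have hstep : ∀ n, complexity w (n + 1) = complexity w n + (d - 1) := by
      intro n
      induction n with
      | zero => rw [hall, S19.complexity_zero]; omega
      | succ m ih =>
        show complexity w (m + 2) = complexity w (m + 1) + (d - 1)
        have h2 := hsd m
        omega
    have hform : ∀ n, complexity w n = (d - 1) * n + 1 := by
      intro n
      induction n with
      | zero => simpa using S19.complexity_zero w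
      | succ m ih => rw [hstep m, ih]; ring
    exact fun n _ => hform n
  · rintro ⟨hp, hc⟩
    intro n u hu
    rw [S19.key_iff w hu]
    refine ⟨hc n u hu, ?_⟩
    -- establish the pointwise identity from the sums
    have hform : ∀ m, complexity w m = (d - 1) * m + 1 := by
      intro m
      cases m with
      | zero => simpa using S19.complexity_zero w
      | succ k => exact hp (k + 1) (Nat.succ_le_succ (Nat.zero_le k))
    have hsum : ∑ v ∈ S19.FF w n, (S19.lnum w v + S19.rnum w v) =
        ∑ v ∈ S19.FF w n, (S19.enum w v + 1) := by
      have e1 : ∑ v ∈ S19.FF w n, (S19.lnum w v + S19.rnum w v) =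
          2 * complexity w (n + 1) := by
        rw [Finset.sum_add_distrib, ← S19.sum_lnum, ← S19.sum_rnum, two_mul]
      have e2 : ∑ v ∈ S19.FF w n, (S19.enum w v + 1) =
          complexity w (n + 2) + complexity w n := by
        rw [Finset.sum_add_distrib, ← S19.sum_enum, ← Finset.card_eq_sum_ones,
          ← S19.complexity_eq_card]
      rw [e1, e2, hform n, hform (n + 1), hform (n + 2)]
      have : 1 ≤ d := hd
      cases d with
      | zero => omega
      | succ e => simp [Nat.succ_sub_one]; ring
    have hle : ∀ v ∈ S19.FF w n, S19.lnum w v + S19.rnum w v ≤ S19.enum w v + 1 :=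
      fun v hv => S19.card_le_of_connected w (hc n v ((S19.mem_FF w).1 hv))
    have hpt := (Finset.sum_eq_sum_iff_of_le hle).1 hsum
    exact (hpt u ((S19.mem_FF w).2 hu)).symm
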